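/- Let v ∈ {0,1}^n have Hamming weight k for even k with k ≤ 2αn. If M is drawn uniformly at random from the set of all α-matchings on [n] (viewed as an (αn)×n matrix over GF(2)), then the probability that there exists s ∈ {0,1}^{αn} with Mᵀs = v equals C(αn, k/2) / C(n, k). -/

import Mathlib

open Finset

open scoped Classical

/-- `M` is an α-matching matrix: each row has exactly two ones, and rows have
pairwise disjoint supports (each column contains at most one 1). -/
def IsMatchingMatrix {m n : ℕ} (M : Matrix (Fin m) (Fin n) (ZMod 2)) : Prop :=
  (∀ ℓ, (Finset.univ.filter fun i => M ℓ i ≠ 0).card = 2) ∧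
  (∀ i, (Finset.univ.filter fun ℓ => M ℓ i ≠ 0).card ≤ 1)

namespace MatchingProbAux

variable {m n : ℕ}

/-- the support of row `ℓ`. -/
def edge (M : Matrix (Fin m) (Fin n) (ZMod 2)) (ℓ : Fin m) : Finset (Fin n) :=
  Finset.univ.filter fun i => M ℓ i ≠ 0

/-- `A` is exactly covered by a subcollection of rows of `M`. -/
def Tiles (M : Matrix (Fin m) (Fin n) (ZMod 2)) (A : Finset (Fin n)) : Prop :=
  ∃ S : Finset (Fin m), A = S.biUnion (edge M)

lemma zmod2_cases (x : ZMod 2) : x = 0 ∨ x = 1 := by revert x; decide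

lemma zmod2_eq_ite (x : ZMod 2) : x = if x ≠ 0 then 1 else 0 := by revert x; decide

lemma edge_disjoint {M : Matrix (Fin m) (Fin n) (ZMod 2)} (hM : IsMatchingMatrix M) :
    ∀ ℓ ∈ (univ : Finset (Fin m)), ∀ ℓ' ∈ (univ : Finset (Fin m)), ℓ ≠ ℓ' →
      Disjoint (edge M ℓ) (edge M ℓ') := by
  intro ℓ _ ℓ' _ hne
  rw [Finset.disjoint_left]
  intro i hi hi'
  simp only [edge, mem_filter, mem_univ, true_and] at hi hi'
  have hsub : ({ℓ, ℓ'} : Finset (Fin m)) ⊆ univ.filter fun l => M l i ≠ 0 := by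
    intro x hx
    simp only [mem_insert, mem_singleton] at hx
    rcases hx with rfl | rfl <;> simp [hi, hi']
  have h2 := (Finset.card_le_card hsub).trans (hM.2 i)
  rw [Finset.card_pair hne] at h2
  omega

lemma mem_edge {M : Matrix (Fin m) (Fin n) (ZMod 2)} {ℓ : Fin m} {i : Fin n} :
    i ∈ edge M ℓ ↔ M ℓ i ≠ 0 := by simp [edge]

lemma vecMul_indicator {M : Matrix (Fin m) (Fin n) (ZMod 2)} (hM : IsMatchingMatrix M)
    (S : Finset (Fin m)) (i : Fin n) :
    Matrix.vecMul (fun ℓ => if ℓ ∈ S then (1 : ZMod 2) else 0) M i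
      = if i ∈ S.biUnion (edge M) then 1 else 0 := by
  have h1 : Matrix.vecMul (fun ℓ => if ℓ ∈ S then (1 : ZMod 2) else 0) M i
      = ∑ ℓ : Fin m, (if ℓ ∈ S then (1 : ZMod 2) else 0) * M ℓ i := by
    rfl
  rw [h1]
  have h2 : ∀ ℓ : Fin m, (if ℓ ∈ S then (1 : ZMod 2) else 0) * M ℓ i
      = if ℓ ∈ S ∧ M ℓ i ≠ 0 then 1 else 0 := by
    intro ℓ
    by_cases hℓ : ℓ ∈ S
    · rcases zmod2_cases (M ℓ i) with h | h <;> simp [hℓ, h]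
    · simp [hℓ]
  rw [Finset.sum_congr rfl fun ℓ _ => h2 ℓ]
  rw [Finset.sum_boole]
  have hsub : (univ.filter fun ℓ => ℓ ∈ S ∧ M ℓ i ≠ 0) ⊆ univ.filter fun ℓ => M ℓ i ≠ 0 := by
    intro x hx; simp only [mem_filter, mem_univ, true_and] at hx ⊢; exact hx.2
  have hle : (univ.filter fun ℓ => ℓ ∈ S ∧ M ℓ i ≠ 0).card ≤ 1 :=
    (Finset.card_le_card hsub).trans (hM.2 i)
  by_cases hmem : i ∈ S.biUnion (edge M)
  · simp only [hmem, if_true]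
    obtain ⟨ℓ, hℓS, hℓe⟩ := Finset.mem_biUnion.mp hmem
    rw [mem_edge] at hℓe
    have hne : (univ.filter fun ℓ => ℓ ∈ S ∧ M ℓ i ≠ 0).Nonempty :=
      ⟨ℓ, by simp [hℓS, hℓe]⟩
    have : (univ.filter fun ℓ => ℓ ∈ S ∧ M ℓ i ≠ 0).card = 1 := by
      have := Finset.card_pos.mpr hne; omega
    rw [this]; norm_num
  · have : (univ.filter fun ℓ => ℓ ∈ S ∧ M ℓ i ≠ 0) = ∅ := by
      rw [Finset.eq_empty_iff_forall_notMem]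
      intro ℓ hℓ
      simp only [mem_filter, mem_univ, true_and] at hℓ
      exact hmem (Finset.mem_biUnion.mpr ⟨ℓ, hℓ.1, mem_edge.mpr hℓ.2⟩)
    simp [this, hmem]

lemma exists_s_iff {M : Matrix (Fin m) (Fin n) (ZMod 2)} (hM : IsMatchingMatrix M)
    (v : Fin n → ZMod 2) :
    (∃ s : Fin m → ZMod 2, Matrix.vecMul s M = v) ↔
      Tiles M (univ.filter fun i => v i ≠ 0) := by
  constructor
  · rintro ⟨s, rfl⟩
    refine ⟨univ.filter fun ℓ => s ℓ ≠ 0, ?_⟩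
    have hs : s = fun ℓ => if ℓ ∈ univ.filter (fun ℓ => s ℓ ≠ 0) then (1 : ZMod 2) else 0 := by
      funext ℓ
      simp only [mem_filter, mem_univ, true_and]
      exact zmod2_eq_ite (s ℓ)
    ext i
    simp only [mem_filter, mem_univ, true_and]
    conv_lhs => rw [hs]
    rw [vecMul_indicator hM]
    by_cases h : i ∈ (univ.filter fun ℓ => s ℓ ≠ 0).biUnion (edge M) <;> simp [h]
  · rintro ⟨S, hS⟩
    refine ⟨fun ℓ => if ℓ ∈ S then 1 else 0, ?_⟩
    funext i
    rw [vecMul_indicator hM, ← hS]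
    simp only [mem_filter, mem_univ, true_and]
    exact (zmod2_eq_ite (v i)).symm

lemma biUnion_inj {M : Matrix (Fin m) (Fin n) (ZMod 2)} (hM : IsMatchingMatrix M)
    {S T : Finset (Fin m)} (h : S.biUnion (edge M) = T.biUnion (edge M)) : S = T := by
  have key : ∀ S T : Finset (Fin m), S.biUnion (edge M) = T.biUnion (edge M) → S ⊆ T := by
    intro S T h ℓ hℓ
    have hne : (edge M ℓ).Nonempty := by
      rw [← Finset.card_pos]
      have h2 : (edge M ℓ).card = 2 := hM.1 ℓ
      omega
    obtain ⟨i, hi⟩ := hne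
    have : i ∈ T.biUnion (edge M) := by
      rw [← h]; exact Finset.mem_biUnion.mpr ⟨ℓ, hℓ, hi⟩
    obtain ⟨ℓ', hℓ'T, hℓ'e⟩ := Finset.mem_biUnion.mp this
    have : ℓ = ℓ' := by
      rw [mem_edge] at hi hℓ'e
      exact Finset.card_le_one.mp (hM.2 i) ℓ (by simp [hi]) ℓ' (by simp [hℓ'e])
    exact this ▸ hℓ'T
  exact Finset.Subset.antisymm (key S T h) (key T S h.symm)

lemma card_biUnion_edge {M : Matrix (Fin m) (Fin n) (ZMod 2)} (hM : IsMatchingMatrix M)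
    (S : Finset (Fin m)) : (S.biUnion (edge M)).card = 2 * S.card := by
  rw [Finset.card_biUnion (fun x hx y hy hxy => edge_disjoint hM x (mem_univ x) y (mem_univ y) hxy)]
  have h2 : ∀ ℓ ∈ S, (edge M ℓ).card = 2 := fun ℓ _ => hM.1 ℓ
  rw [Finset.sum_congr rfl h2, Finset.sum_const, smul_eq_mul]
  ring

lemma card_tiled {M : Matrix (Fin m) (Fin n) (ZMod 2)} (hM : IsMatchingMatrix M)
    {k : ℕ} (hke : Even k) :
    ((powersetCard k (univ : Finset (Fin n))).filter (Tiles M)).card = m.choose (k / 2) := by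
  have hdvd : 2 ∣ k := hke.two_dvd
  have : ((powersetCard (k / 2) (univ : Finset (Fin m)))).card
      = ((powersetCard k (univ : Finset (Fin n))).filter (Tiles M)).card := by
    apply Finset.card_bij (fun S _ => S.biUnion (edge M))
    · intro S hS
      rw [Finset.mem_powersetCard] at hS
      rw [Finset.mem_filter, Finset.mem_powersetCard]
      refine ⟨⟨Finset.subset_univ _, ?_⟩, ⟨S, rfl⟩⟩
      rw [card_biUnion_edge hM, hS.2]
      omega
    · intro S hS T hT h
      exact biUnion_inj hM h
    · intro A hA
      rw [Finset.mem_filter, Finset.mem_powersetCard] at hA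
      obtain ⟨⟨_, hcard⟩, S, rfl⟩ := hA
      rw [card_biUnion_edge hM] at hcard
      refine ⟨S, ?_, rfl⟩
      rw [Finset.mem_powersetCard]
      exact ⟨Finset.subset_univ _, by omega⟩
  rw [← this, Finset.card_powersetCard, Finset.card_univ, Fintype.card_fin]

lemma exists_perm (A B : Finset (Fin n)) (h : A.card = B.card) :
    ∃ σ : Equiv.Perm (Fin n), A.image σ = B := by
  have h2 : (Aᶜ : Finset (Fin n)).card = (Bᶜ : Finset (Fin n)).card := by
    rw [Finset.card_compl, Finset.card_compl, h]
  let e1 : {x // x ∈ A} ≃ {x // x ∈ B} := Finset.equivOfCardEq h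
  let e2 : {x // x ∈ Aᶜ} ≃ {x // x ∈ Bᶜ} := Finset.equivOfCardEq h2
  let f1 : {x // x ∈ (A : Set (Fin n))} ≃ {x // x ∈ (B : Set (Fin n))} :=
    (Equiv.subtypeEquivRight fun x => Finset.mem_coe).trans
      (e1.trans (Equiv.subtypeEquivRight fun x => Finset.mem_coe).symm)
  let f2 : {x // x ∈ ((A : Set (Fin n))ᶜ)} ≃ {x // x ∈ ((B : Set (Fin n))ᶜ)} :=
    (Equiv.subtypeEquivRight fun x => by simp [Set.mem_compl_iff]).trans
      (e2.trans (Equiv.subtypeEquivRight fun x => by simp [Set.mem_compl_iff]).symm)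
  let σ : Equiv.Perm (Fin n) :=
    (Equiv.Set.sumCompl (A : Set (Fin n))).symm.trans
      ((f1.sumCongr f2).trans (Equiv.Set.sumCompl (B : Set (Fin n))))
  refine ⟨σ, ?_⟩
  have hmaps : ∀ x ∈ A, σ x ∈ B := by
    intro x hx
    have hx' : x ∈ (A : Set (Fin n)) := hx
    show ((Equiv.Set.sumCompl (B : Set (Fin n)))
      ((f1.sumCongr f2) ((Equiv.Set.sumCompl (A : Set (Fin n))).symm x))) ∈ B
    rw [Equiv.Set.sumCompl_symm_apply_of_mem hx']
    simp only [Equiv.sumCongr_apply, Sum.map_inl, Equiv.Set.sumCompl_apply_inl]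
    exact (f1 ⟨x, hx'⟩).2
  apply Finset.eq_of_subset_of_card_le
  · intro y hy
    obtain ⟨x, hx, rfl⟩ := Finset.mem_image.mp hy
    exact hmaps x hx
  · rw [Finset.card_image_of_injective _ σ.injective, h]

lemma edge_comp (M : Matrix (Fin m) (Fin n) (ZMod 2)) (σ : Equiv.Perm (Fin n)) (ℓ : Fin m) :
    edge (fun ℓ i => M ℓ (σ i)) ℓ = (edge M ℓ).image σ.symm := by
  ext i
  simp only [edge, mem_filter, mem_univ, true_and, Finset.mem_image]
  constructor
  · intro h; exact ⟨σ i, h, σ.symm_apply_apply i⟩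
  · rintro ⟨j, hj, rfl⟩; simpa using hj

lemma matching_comp {M : Matrix (Fin m) (Fin n) (ZMod 2)} (σ : Equiv.Perm (Fin n))
    (hM : IsMatchingMatrix M) : IsMatchingMatrix (fun ℓ i => M ℓ (σ i)) := by
  constructor
  · intro ℓ
    have := edge_comp M σ ℓ
    simp only [edge] at this
    rw [this, Finset.card_image_of_injective _ σ.symm.injective]
    exact hM.1 ℓ
  · intro i
    exact hM.2 (σ i)

lemma tiles_comp {M : Matrix (Fin m) (Fin n) (ZMod 2)} (σ : Equiv.Perm (Fin n))
    {A B : Finset (Fin n)} (hAB : A.image σ = B) :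
    Tiles (fun ℓ i => M ℓ (σ i)) A ↔ Tiles M B := by
  have h1 : ∀ S : Finset (Fin m),
      Finset.image σ (S.biUnion (edge fun ℓ i => M ℓ (σ i))) = S.biUnion (edge M) := by
    intro S
    rw [Finset.biUnion_image]
    apply Finset.biUnion_congr rfl
    intro ℓ _
    rw [edge_comp, Finset.image_image]
    simp
  constructor
  · rintro ⟨S, hS⟩
    exact ⟨S, by rw [← hAB, hS, h1]⟩
  · rintro ⟨S, hS⟩
    refine ⟨S, ?_⟩
    have hA : A = Finset.image σ.symm B := by
      rw [← hAB, Finset.image_image]; simp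
    rw [hA, hS, ← h1 S, Finset.image_image]
    simp

lemma card_matching_tiles_eq (A B : Finset (Fin n)) (h : A.card = B.card) :
    (univ.filter fun M : Matrix (Fin m) (Fin n) (ZMod 2) =>
        IsMatchingMatrix M ∧ Tiles M A).card
      = (univ.filter fun M : Matrix (Fin m) (Fin n) (ZMod 2) =>
        IsMatchingMatrix M ∧ Tiles M B).card := by
  obtain ⟨σ, hσ⟩ := exists_perm A B h
  symm
  apply Finset.card_equiv
    (⟨fun M => fun ℓ i => M ℓ (σ i), fun M => fun ℓ i => M ℓ (σ.symm i),
      fun M => by funext ℓ i; simp, fun M => by funext ℓ i; simp⟩ :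
      Matrix (Fin m) (Fin n) (ZMod 2) ≃ Matrix (Fin m) (Fin n) (ZMod 2))
  intro M
  simp only [Finset.mem_filter, Finset.mem_univ, true_and, Equiv.coe_fn_mk]
  constructor
  · rintro ⟨hM, ht⟩
    exact ⟨matching_comp σ hM, (tiles_comp σ hσ).mpr ht⟩
  · rintro ⟨hM', ht'⟩
    refine ⟨?_, (tiles_comp σ hσ).mp ht'⟩
    have hMeq : M = fun ℓ i => (fun ℓ i => M ℓ (σ i)) ℓ (σ.symm i) := by
      funext ℓ i; simp
    rw [hMeq]
    exact matching_comp σ.symm hM'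

end MatchingProbAux

theorem matching_probability {m n k : ℕ} (hm : 0 < m) (h2m : 2 * m ≤ n)
    (v : Fin n → ZMod 2) (hk : (Finset.univ.filter fun i => v i ≠ 0).card = k)
    (hkeven : Even k) (hk2m : k ≤ 2 * m) :
    ((Finset.univ.filter (fun M : Matrix (Fin m) (Fin n) (ZMod 2) =>
          IsMatchingMatrix M ∧ ∃ s : Fin m → ZMod 2, Matrix.vecMul s M = v)).card : ℝ)
      / ((Finset.univ.filter (fun M : Matrix (Fin m) (Fin n) (ZMod 2) =>
          IsMatchingMatrix M)).card : ℝ)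
    = (Nat.choose m (k / 2) : ℝ) / (Nat.choose n k : ℝ) := by
  classical
  open MatchingProbAux in
  set A₀ : Finset (Fin n) := univ.filter fun i => v i ≠ 0 with hA₀def
  set F : Finset (Matrix (Fin m) (Fin n) (ZMod 2)) :=
    univ.filter (fun M => IsMatchingMatrix M) with hFdef
  set 𝒜 : Finset (Finset (Fin n)) := powersetCard k (univ : Finset (Fin n)) with h𝒜def
  -- rewrite the numerator set using Tiles
  have hnum : (univ.filter (fun M : Matrix (Fin m) (Fin n) (ZMod 2) =>
        IsMatchingMatrix M ∧ ∃ s : Fin m → ZMod 2, Matrix.vecMul s M = v))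
      = univ.filter fun M => IsMatchingMatrix M ∧ Tiles M A₀ := by
    apply Finset.filter_congr
    intro M _
    simp only [and_congr_right_iff]
    intro hM
    exact exists_s_iff hM v
  -- double counting
  have hdouble : ∑ M ∈ F, (𝒜.filter (Tiles M)).card
      = ∑ A ∈ 𝒜, (F.filter (fun M => Tiles M A)).card := by
    simp_rw [Finset.card_filter]
    exact Finset.sum_comm
  have hL : ∑ M ∈ F, (𝒜.filter (Tiles M)).card = F.card * m.choose (k / 2) := by
    have : ∀ M ∈ F, (𝒜.filter (Tiles M)).card = m.choose (k / 2) := by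
      intro M hM
      rw [hFdef, Finset.mem_filter] at hM
      exact card_tiled hM.2 hkeven
    rw [Finset.sum_congr rfl this, Finset.sum_const, smul_eq_mul]
  set G : ℕ := (univ.filter fun M : Matrix (Fin m) (Fin n) (ZMod 2) =>
      IsMatchingMatrix M ∧ Tiles M A₀).card with hGdef
  have hA₀card : A₀.card = k := hk
  have hfilt : ∀ A : Finset (Fin n), F.filter (fun M => Tiles M A)
      = univ.filter fun M : Matrix (Fin m) (Fin n) (ZMod 2) =>
          IsMatchingMatrix M ∧ Tiles M A := by
    intro A
    rw [hFdef, Finset.filter_filter]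
  have hR : ∑ A ∈ 𝒜, (F.filter (fun M => Tiles M A)).card = n.choose k * G := by
    have hstep : ∀ A ∈ 𝒜, (F.filter (fun M => Tiles M A)).card = G := by
      intro A hA
      rw [h𝒜def, Finset.mem_powersetCard] at hA
      rw [hfilt A, hGdef]
      exact card_matching_tiles_eq A A₀ (by rw [hA.2, hA₀card])
    rw [Finset.sum_congr rfl hstep, Finset.sum_const, smul_eq_mul, h𝒜def,
      Finset.card_powersetCard, Finset.card_univ, Fintype.card_fin]
  have key : F.card * m.choose (k / 2) = n.choose k * G := by
    rw [← hL, hdouble, hR]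
  -- nonemptiness of F
  have hF0 : 0 < F.card := by
    apply Finset.card_pos.mpr
    refine ⟨fun ℓ i => if (i : ℕ) = 2 * (ℓ : ℕ) ∨ (i : ℕ) = 2 * (ℓ : ℕ) + 1 then 1 else 0, ?_⟩
    rw [hFdef]
    refine Finset.mem_filter.mpr ⟨Finset.mem_univ _, ?_, ?_⟩
    · intro ℓ
      have h1 : 2 * (ℓ : ℕ) < n := by have := ℓ.isLt; omega
      have h2 : 2 * (ℓ : ℕ) + 1 < n := by have := ℓ.isLt; omega
      have hset : (univ.filter fun i : Fin n =>
          (if (i : ℕ) = 2 * (ℓ : ℕ) ∨ (i : ℕ) = 2 * (ℓ : ℕ) + 1 then (1 : ZMod 2) else 0) ≠ 0)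
          = {⟨2 * (ℓ : ℕ), h1⟩, ⟨2 * (ℓ : ℕ) + 1, h2⟩} := by
        ext i
        simp only [Finset.mem_filter, Finset.mem_univ, true_and, Finset.mem_insert,
          Finset.mem_singleton, ne_eq, ite_eq_right_iff, not_forall, Fin.ext_iff]
        constructor
        · rintro ⟨h, -⟩; exact h
        · intro h; exact ⟨h, one_ne_zero⟩
      rw [hset, Finset.card_insert_of_notMem (by simp [Fin.ext_iff]), Finset.card_singleton]
    · intro i
      rw [Finset.card_le_one]
      intro a ha b hb
      simp only [Finset.mem_filter, Finset.mem_univ, true_and, ne_eq, ite_eq_right_iff,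
        not_forall] at ha hb
      obtain ⟨ha', -⟩ := ha
      obtain ⟨hb', -⟩ := hb
      have : (a : ℕ) = (b : ℕ) := by omega
      exact Fin.ext this
  have hCn : 0 < n.choose k := Nat.choose_pos (by omega)
  rw [hnum]
  rw [show (univ.filter fun M : Matrix (Fin m) (Fin n) (ZMod 2) =>
      IsMatchingMatrix M ∧ Tiles M A₀).card = G from rfl]
  rw [show (univ.filter fun M : Matrix (Fin m) (Fin n) (ZMod 2) =>
      IsMatchingMatrix M).card = F.card from rfl]
  rw [div_eq_div_iff (by exact_mod_cast hF0.ne') (by exact_mod_cast hCn.ne')]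
  have : (G : ℝ) * (n.choose k : ℝ) = (m.choose (k / 2) : ℝ) * (F.card : ℝ) := by
    have hnat : G * n.choose k = m.choose (k / 2) * F.card := by
      calc G * n.choose k = n.choose k * G := Nat.mul_comm _ _
        _ = F.card * m.choose (k / 2) := key.symm
        _ = m.choose (k / 2) * F.card := Nat.mul_comm _ _
    exact_mod_cast hnat
  exact this
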